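/- Let k ≥ 1 be an integer and let f : ℕ → ℝ be k-concordant with threshold B. Then for every integer a ≥ B and every positive integer n, the value Δ^{n} f(a) is an integer divisible by ∏_{ℓ=1}^{k} ∏_{p prime, p ≤ n/ℓ} p (an empty product being 1). -/

import Mathlib

open scoped Classical

/-- Forward difference operator on functions `ℕ → ℝ`: `Δ f a = f (a+1) - f a`. -/
noncomputable def fwdD (f : ℕ → ℝ) : ℕ → ℝ := fun a => f (a + 1) - f a

/-- `f : ℕ → ℝ` is `k`-concordant with threshold `B` if for every tuple
`m₀, …, m_k` of integers `≥ B` there is a `P ∈ ℤ[X]` with `P(mᵢ) = f(mᵢ)` for all `i`. -/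
def IsConcordant (k : ℕ) (f : ℕ → ℝ) (B : ℕ) : Prop :=
  ∀ m : Fin (k + 1) → ℕ, (∀ i, B ≤ m i) →
    ∃ P : Polynomial ℤ, ∀ i, ((P.eval ((m i : ℤ)) : ℤ) : ℝ) = f (m i)

open Finset Polynomial fwdDiff fwdDiff_aux

/-- The shift endomorphism `g ↦ g (· + 1)` on `ℕ → ℤ`. -/
noncomputable def eE : Module.End ℤ (ℕ → ℤ) := shiftₗ ℕ ℤ 1

lemma eE_pow_apply (c : ℕ) (g : ℕ → ℤ) (y : ℕ) : (eE ^ c) g y = g (y + c) := by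
  rw [eE, shiftₗ_pow_apply, smul_eq_mul, mul_one]

lemma aeval_Xpow_sub_one (p : ℕ) :
    (Polynomial.aeval eE ((X : Polynomial ℤ) ^ p - 1)) = fwdDiffₗ ℕ ℤ p := by
  have h1 : eE ^ p = shiftₗ ℕ ℤ p := by
    apply LinearMap.ext; intro g; funext y
    rw [eE_pow_apply, shiftₗ_apply]
  rw [map_sub, map_pow, aeval_X, map_one, h1, shiftₗ, add_sub_cancel_right]

lemma comp_sub_dvd (P : Polynomial ℤ) (c : ℤ) : C c ∣ P.comp (X + C c) - P := by
  have h := Polynomial.sub_dvd_eval_sub (X + C c) X (P.map C)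
  simp only [Polynomial.eval_map] at h
  have h1 : Polynomial.eval₂ C (X + C c) P = P.comp (X + C c) := rfl
  have h2 : Polynomial.eval₂ C X P = P.comp X := rfl
  rw [h1, h2, Polynomial.comp_X, add_sub_cancel_left] at h
  exact h

lemma fwdDiff_poly (p : ℕ) : ∀ (m : ℕ) (P : Polynomial ℤ), ∃ R : Polynomial ℤ,
    ∀ (c : ℤ) (y : ℕ), (Δ_[p])^[m] (fun x : ℕ => P.eval (c + x)) y = (p : ℤ)^m * R.eval (c + y) := by
  intro m
  induction m with
  | zero => intro P; exact ⟨P, fun c y => by simp⟩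
  | succ m IH =>
    intro P
    obtain ⟨Q, hQ⟩ := comp_sub_dvd P (p : ℤ)
    obtain ⟨R, hR⟩ := IH Q
    refine ⟨R, fun c y => ?_⟩
    have hstep : Δ_[p] (fun x : ℕ => P.eval (c + x)) = (p : ℤ) • (fun x : ℕ => Q.eval (c + x)) := by
      funext x
      have := congrArg (fun q => Polynomial.eval (c + (x : ℤ)) q) hQ
      simp only [Polynomial.eval_sub, Polynomial.eval_comp, Polynomial.eval_add, Polynomial.eval_X,
        Polynomial.eval_C, Polynomial.eval_mul] at this
      simp only [fwdDiff, Pi.smul_apply, smul_eq_mul]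
      push_cast
      rw [← add_assoc]
      linarith [this]
    rw [Function.iterate_succ_apply, hstep, fwdDiff_iter_const_smul, Pi.smul_apply, smul_eq_mul,
      hR c y, pow_succ]
    ring

lemma conc_dvd {k : ℕ} {f : ℕ → ℝ} {B : ℕ} (hconc : IsConcordant k f B)
    {a : ℕ} (ha : B ≤ a) {g : ℕ → ℤ} (hg : ∀ x, (g x : ℝ) = f (a + x))
    (p : ℕ) {m : ℕ} (hm : m ≤ k) (s : ℕ) :
    (p : ℤ)^m ∣ (Δ_[p])^[m] g s := by
  set μ : Fin (k+1) → ℕ := fun i => a + (s + (min i.1 m) * p) with hμdef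
  obtain ⟨P, hP⟩ := hconc μ (fun i => le_trans ha (Nat.le_add_right _ _))
  have key : ∀ j, j ≤ m → g (s + j * p) = P.eval ((a : ℤ) + (s + j * p : ℕ)) := by
    intro j hj
    have hjk : j < k + 1 := Nat.lt_succ_of_le (le_trans hj hm)
    have h1 := hP ⟨j, hjk⟩
    have hμ : μ ⟨j, hjk⟩ = a + (s + j * p) := by
      simp only [hμdef, Nat.min_eq_left hj]
    rw [hμ] at h1
    have h2 := hg (s + j * p)
    have : ((P.eval ((a + (s + j * p) : ℕ) : ℤ) : ℤ) : ℝ) = ((g (s + j * p) : ℤ) : ℝ) := by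
      rw [h1, h2]
    have h3 : P.eval ((a + (s + j * p) : ℕ) : ℤ) = g (s + j * p) := by exact_mod_cast this
    rw [← h3]; push_cast; ring_nf
  obtain ⟨R, hR⟩ := fwdDiff_poly p m P
  refine ⟨R.eval ((a : ℤ) + s), ?_⟩
  have hR0 := hR ((a : ℤ) + (s : ℤ)) 0
  rw [fwdDiff_iter_eq_sum_shift] at hR0 ⊢
  simp only [Nat.cast_zero, add_zero, zero_add] at hR0
  rw [← hR0]
  refine Finset.sum_congr rfl fun j hj => ?_
  rw [Finset.mem_range] at hj
  have hj' : j ≤ m := Nat.lt_succ_iff.mp hj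
  rw [smul_eq_mul, smul_eq_mul, key j hj']
  have : ((s + j * p : ℕ) : ℤ) = (s : ℤ) + ((j • p : ℕ) : ℤ) := by push_cast [smul_eq_mul]; ring
  rw [this, ← add_assoc]
  simp [smul_eq_mul]

lemma conc_dvd_gen {k : ℕ} {f : ℕ → ℝ} {B : ℕ} (hconc : IsConcordant k f B)
    {a : ℕ} (ha : B ≤ a) {g : ℕ → ℤ} (hg : ∀ x, (g x : ℝ) = f (a + x))
    (p : ℕ) {m : ℕ} (hm : m ≤ k) (Q : Polynomial ℤ) (x : ℕ) :
    (p : ℤ)^m ∣ (Δ_[p])^[m] ((Polynomial.aeval eE Q) g) x := by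
  have hφ : (Polynomial.aeval eE Q) g
      = ∑ i ∈ range (Q.natDegree + 1), Q.coeff i • (fun y => g (y + i)) := by
    rw [Polynomial.aeval_eq_sum_range, LinearMap.sum_apply]
    refine Finset.sum_congr rfl fun i _ => ?_
    funext y
    rw [LinearMap.smul_apply, Pi.smul_apply, Pi.smul_apply, eE_pow_apply]
  rw [hφ, fwdDiff_iter_finset_sum, Finset.sum_apply]
  refine Finset.dvd_sum fun i _ => ?_
  rw [fwdDiff_iter_const_smul, Pi.smul_apply, smul_eq_mul]
  refine Dvd.dvd.mul_left ?_ _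
  have hshift : (Δ_[p])^[m] (fun y => g (y + i)) x = (Δ_[p])^[m] g (x + i) := by
    rw [fwdDiff_iter_eq_sum_shift, fwdDiff_iter_eq_sum_shift]
    refine Finset.sum_congr rfl fun j _ => ?_
    congr 2
    omega
  rw [hshift]
  exact conc_dvd hconc ha hg p hm (x + i)

lemma frob_poly {p : ℕ} (hp : p.Prime) :
    ∃ S : Polynomial ℤ, ((X : Polynomial ℤ) - 1)^p = (X^p - 1) + C (p : ℤ) * S := by
  have hdvd : C ((p : ℕ) : ℤ) ∣ ((X : Polynomial ℤ) - 1)^p - (X^p - 1) := by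
    rw [Polynomial.C_dvd_iff_dvd_coeff]
    intro i
    haveI : Fact p.Prime := ⟨hp⟩
    have hmap : ((((X : Polynomial ℤ) - 1)^p - (X^p - 1)).map (Int.castRingHom (ZMod p))) = 0 := by
      simp only [Polynomial.map_sub, Polynomial.map_pow, Polynomial.map_one, Polynomial.map_X]
      rw [sub_pow_char]
      simp
    have := congrArg (fun q => Polynomial.coeff q i) hmap
    simp only [Polynomial.coeff_map, Polynomial.coeff_zero] at this
    exact_mod_cast (ZMod.intCast_zmod_eq_zero_iff_dvd _ p).mp this
  obtain ⟨S, hS⟩ := hdvd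
  exact ⟨S, by rw [← hS]; ring⟩

lemma prime_pow_dvd_main {k : ℕ} (g : ℕ → ℤ)
    (hdvd : ∀ (p : ℕ) (m : ℕ), m ≤ k → ∀ (Q : Polynomial ℤ) (x : ℕ),
      (p : ℤ)^m ∣ (Δ_[p])^[m] ((Polynomial.aeval eE Q) g) x)
    (n : ℕ) {p : ℕ} (hp : p.Prime) :
    (p : ℤ) ^ (min k (n / p)) ∣ (Δ_[1])^[n] g 0 := by
  set t := min k (n / p) with ht
  have htp : t * p ≤ n :=
    le_trans (Nat.mul_le_mul_right p (min_le_right _ _)) (Nat.div_mul_le_self n p)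
  obtain ⟨S, hS⟩ := frob_poly hp
  have hid : ((X : Polynomial ℤ) - 1)^n = ∑ i ∈ range (t + 1),
      C ((p : ℤ)^(t - i) * (t.choose i : ℤ)) *
        ((X^p - 1)^i * (S^(t - i) * (X - 1)^(n - t * p))) := by
    have h1 : ((X : Polynomial ℤ) - 1)^n = ((X - 1)^p)^t * (X - 1)^(n - t * p) := by
      rw [← pow_mul, ← pow_add]
      congr 1
      rw [mul_comm p t]
      omega
    rw [h1, hS, add_pow, Finset.sum_mul]
    refine Finset.sum_congr rfl fun i _ => ?_
    rw [mul_pow]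
    simp only [map_mul, map_pow, map_natCast]
    ring
  have hL : (Polynomial.aeval eE (((X : Polynomial ℤ) - 1)^n)) g 0 = (Δ_[1])^[n] g 0 := by
    have h1 : (Polynomial.aeval eE ((X : Polynomial ℤ) - 1)) = fwdDiffₗ ℕ ℤ 1 := by
      have := aeval_Xpow_sub_one 1
      rwa [pow_one] at this
    rw [map_pow, h1, Module.End.pow_apply, coe_fwdDiffₗ]
  rw [← hL]
  have hsum := congrArg (fun Q => (Polynomial.aeval eE Q) g 0) hid
  simp only [map_sum, LinearMap.sum_apply, Finset.sum_apply] at hsum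
  rw [hsum]
  refine Finset.dvd_sum fun i hi => ?_
  rw [Finset.mem_range] at hi
  have hit : i ≤ t := Nat.lt_succ_iff.mp hi
  have hik : i ≤ k := le_trans hit (min_le_left _ _)
  have hterm : ((Polynomial.aeval eE) (C ((p : ℤ)^(t - i) * (t.choose i : ℤ)) *
      ((X^p - 1)^i * (S^(t - i) * (X - 1)^(n - t * p))))) g 0
      = ((p : ℤ)^(t - i) * (t.choose i : ℤ)) *
        ((Δ_[p])^[i] ((Polynomial.aeval eE) (S^(t - i) * (X - 1)^(n - t * p)) g) 0) := by
    rw [map_mul, Module.End.mul_apply, Polynomial.aeval_C, Module.algebraMap_end_apply,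
      Pi.smul_apply, smul_eq_mul]
    congr 1
    rw [map_mul, map_pow, aeval_Xpow_sub_one, Module.End.mul_apply, Module.End.pow_apply,
      coe_fwdDiffₗ]
  rw [hterm]
  obtain ⟨z, hz⟩ := hdvd p i hik (S^(t - i) * (X - 1)^(n - t * p)) 0
  rw [hz]
  refine ⟨(t.choose i : ℤ) * z, ?_⟩
  rw [← pow_sub_mul_pow (p : ℤ) hit]
  ring

lemma prod_eq (n k : ℕ) :
    (∏ ℓ ∈ Finset.Icc 1 k,
        ∏ p ∈ (Finset.range (n + 1)).filter
          (fun p : ℕ => p.Prime ∧ (p : ℝ) ≤ (n : ℝ) / (ℓ : ℝ)), p)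
      = ∏ p ∈ (Finset.range (n + 1)).filter Nat.Prime, p ^ (min k (n / p)) := by
  have step1 : ∀ ℓ ∈ Finset.Icc 1 k,
      (Finset.range (n + 1)).filter (fun p : ℕ => p.Prime ∧ (p : ℝ) ≤ (n : ℝ) / (ℓ : ℝ))
        = ((Finset.range (n + 1)).filter Nat.Prime).filter (fun p => ℓ * p ≤ n) := by
    intro ℓ hℓ
    rw [Finset.mem_Icc] at hℓ
    have hℓ0 : (0 : ℝ) < (ℓ : ℝ) := by exact_mod_cast hℓ.1
    ext p
    simp only [Finset.mem_filter, Finset.mem_range]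
    have hiff : ((p : ℝ) ≤ (n : ℝ) / (ℓ : ℝ)) ↔ ℓ * p ≤ n := by
      rw [le_div_iff₀ hℓ0]
      constructor
      · intro h
        have : ((p * ℓ : ℕ) : ℝ) ≤ ((n : ℕ) : ℝ) := by push_cast; exact h
        have h2 := Nat.cast_le.mp this
        rwa [mul_comm] at h2
      · intro h
        have : ((p * ℓ : ℕ) : ℝ) ≤ ((n : ℕ) : ℝ) := by
          exact_mod_cast (by rwa [mul_comm] : p * ℓ ≤ n)
        push_cast at this
        exact this
    tauto
  rw [Finset.prod_congr rfl fun ℓ hℓ => Finset.prod_congr (step1 ℓ hℓ) (fun _ _ => rfl)]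
  rw [Finset.prod_congr rfl fun ℓ _ => Finset.prod_filter (fun p => ℓ * p ≤ n) (fun p : ℕ => p)]
  rw [Finset.prod_comm]
  refine Finset.prod_congr rfl fun p hp => ?_
  rw [Finset.mem_filter] at hp
  have hp0 : 0 < p := hp.2.pos
  have : ∀ ℓ, (ℓ * p ≤ n ↔ ℓ ≤ n / p) := fun ℓ => by
    rw [Nat.le_div_iff_mul_le hp0]
  calc (∏ ℓ ∈ Finset.Icc 1 k, if ℓ * p ≤ n then p else 1)
      = ∏ ℓ ∈ (Finset.Icc 1 k).filter (fun ℓ => ℓ * p ≤ n), p :=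
        (Finset.prod_filter _ _).symm
    _ = p ^ (min k (n / p)) := by
        rw [Finset.prod_const]
        congr 1
        have : (Finset.Icc 1 k).filter (fun ℓ => ℓ * p ≤ n) = Finset.Icc 1 (min k (n / p)) := by
          ext ℓ
          simp only [Finset.mem_filter, Finset.mem_Icc, this ℓ]
          omega
        rw [this, Nat.card_Icc]
        simp

theorem stmt15 (k : ℕ) (hk : 1 ≤ k) (f : ℕ → ℝ) (B : ℕ)
    (hconc : IsConcordant k f B) (a : ℕ) (ha : B ≤ a) (n : ℕ) (hn : 1 ≤ n) :
    ∃ m : ℤ, fwdD^[n] f a =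
      ((∏ ℓ ∈ Finset.Icc 1 k,
          ∏ p ∈ (Finset.range (n + 1)).filter
            (fun p : ℕ => p.Prime ∧ (p : ℝ) ≤ (n : ℝ) / (ℓ : ℝ)), p : ℕ) : ℝ) * (m : ℝ) := by
  -- integer-valued version of f near a
  have hex : ∀ x : ℕ, ∃ z : ℤ, (z : ℝ) = f (a + x) := by
    intro x
    obtain ⟨P, hP⟩ := hconc (fun _ => a + x) (fun _ => le_trans ha (Nat.le_add_right _ _))
    exact ⟨P.eval ((a + x : ℕ) : ℤ), hP 0⟩
  set g : ℕ → ℤ := fun x => (hex x).choose with hgdef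
  have hg : ∀ x, (g x : ℝ) = f (a + x) := fun x => (hex x).choose_spec
  -- the integer M := Δⁿ g 0
  set M : ℤ := (Δ_[(1 : ℕ)])^[n] g 0 with hM
  -- M equals fwdD^[n] f a
  have hcast : fwdD^[n] f a = (M : ℝ) := by
    have h1 : fwdD^[n] f a = (Δ_[(1 : ℕ)])^[n] f a := rfl
    rw [h1, hM, fwdDiff_iter_eq_sum_shift, fwdDiff_iter_eq_sum_shift]
    push_cast [zsmul_eq_mul]
    refine Finset.sum_congr rfl fun j hj => ?_
    rw [hg]
    norm_num
  -- per-prime divisibility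
  have hper : ∀ p ∈ (Finset.range (n + 1)).filter Nat.Prime,
      ((p ^ (min k (n / p)) : ℕ) : ℤ) ∣ M := by
    intro p hp
    rw [Finset.mem_filter] at hp
    push_cast
    exact prime_pow_dvd_main g
      (fun p m hm Q x => conc_dvd_gen hconc ha hg p hm Q x) n hp.2
  -- coprimality and product divisibility
  have hNdvd : ((∏ p ∈ (Finset.range (n + 1)).filter Nat.Prime, p ^ (min k (n / p)) : ℕ) : ℤ)
      ∣ M := by
    push_cast
    refine Finset.prod_dvd_of_coprime ?_ (fun p hp => by
      have := hper p hp
      push_cast at this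
      exact this)
    intro p hp q hq hpq
    simp only [Finset.coe_filter, Set.mem_setOf_eq, Finset.mem_range] at hp hq
    exact IsCoprime.pow (Nat.isCoprime_iff_coprime.mpr ((Nat.coprime_primes hp.2 hq.2).mpr hpq))
  rw [← prod_eq n k] at hNdvd
  obtain ⟨m, hm⟩ := hNdvd
  refine ⟨m, ?_⟩
  rw [hcast, hm]
  push_cast
  ring
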